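/- arXiv:2408.08128 — 2 statements merged into one kernel-verified Lean document; each statement's English description precedes it below -/
import Mathlib

section
/- Let G be a bipartite graph with colour classes A and B that can be represented as the star product (G1,v1)*(G2,v2) with principal 3-edge cut ∂X, where X = V(G1) \ {v1}, and suppose that any two edges of ∂X occur together in some 2-factor of G. Then the three endpoints lying in X of the edges of ∂X all belong to the same colour class of G. -/
open SimpleGraph
open scoped Classical

/-- split a set by a predicate -/
private lemma ncard_split {α : Type*} [Finite α] (s : Set α) (Q : α → Prop) :
    s.ncard = {a ∈ s | Q a}.ncard + {a ∈ s | ¬ Q a}.ncard := by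
  rw [← Set.ncard_union_eq (by rw [Set.disjoint_left]; rintro a ⟨_, hq⟩ ⟨_, hnq⟩; exact hnq hq)
    (Set.toFinite _) (Set.toFinite _)]
  congr 1
  ext a
  by_cases hq : Q a <;> simp [hq]

/-- sum of degrees over S -/
private lemma degsum {V : Type*} [Finite V] {G : SimpleGraph V} (H : G.Subgraph)
    (hdeg : ∀ v : V, (H.neighborSet v).ncard = 2) (S : Set V) :
    {p : V × V | H.Adj p.1 p.2 ∧ p.1 ∈ S}.ncard = 2 * S.ncard := by
  have hfin : S.Finite := Set.toFinite S
  refine Set.Finite.induction_on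
    (motive := fun S _ => {p : V × V | H.Adj p.1 p.2 ∧ p.1 ∈ S}.ncard = 2 * S.ncard)
    S hfin (by simp) ?_
  intro a s has hsfin ih
  have hsplit : {p : V × V | H.Adj p.1 p.2 ∧ p.1 ∈ insert a s}
      = ((fun w => (a, w)) '' H.neighborSet a) ∪ {p : V × V | H.Adj p.1 p.2 ∧ p.1 ∈ s} := by
    ext ⟨u, w⟩
    simp only [Set.mem_setOf_eq, Set.mem_insert_iff, Set.mem_union, Set.mem_image,
      SimpleGraph.Subgraph.mem_neighborSet, Prod.mk.injEq]
    constructor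
    · rintro ⟨hadj, rfl | hu⟩
      · exact Or.inl ⟨w, hadj, rfl, rfl⟩
      · exact Or.inr ⟨hadj, hu⟩
    · rintro (⟨w', hadj, rfl, rfl⟩ | ⟨hadj, hu⟩)
      · exact ⟨hadj, Or.inl rfl⟩
      · exact ⟨hadj, Or.inr hu⟩
  have hdisj : Disjoint ((fun w => (a, w)) '' H.neighborSet a)
      {p : V × V | H.Adj p.1 p.2 ∧ p.1 ∈ s} := by
    rw [Set.disjoint_left]
    rintro ⟨u, w⟩ ⟨w', _, heq⟩ ⟨_, hu⟩
    obtain ⟨rfl, rfl⟩ := Prod.mk.injEq .. ▸ heq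
    exact has hu
  rw [hsplit, Set.ncard_union_eq hdisj (Set.toFinite _) (Set.toFinite _),
    Set.ncard_image_of_injective _ (fun w w' h => (Prod.mk.injEq .. ▸ h).2),
    hdeg a, ih, Set.ncard_insert_of_notMem has hsfin]
  ring

/-- swap symmetry -/
private lemma cnt_swap {V : Type*} [Finite V] {G : SimpleGraph V} (H : G.Subgraph)
    (S T : Set V) :
    {p : V × V | H.Adj p.1 p.2 ∧ p.1 ∈ S ∧ p.2 ∈ T}.ncard
      = {p : V × V | H.Adj p.1 p.2 ∧ p.1 ∈ T ∧ p.2 ∈ S}.ncard := by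
  have : {p : V × V | H.Adj p.1 p.2 ∧ p.1 ∈ T ∧ p.2 ∈ S}
      = Prod.swap '' {p : V × V | H.Adj p.1 p.2 ∧ p.1 ∈ S ∧ p.2 ∈ T} := by
    ext ⟨u, w⟩
    simp only [Set.mem_setOf_eq, Set.mem_image, Prod.swap_eq_iff_eq_swap]
    constructor
    · rintro ⟨hadj, ht, hs⟩
      exact ⟨(w, u), ⟨hadj.symm, hs, ht⟩, rfl⟩
    · rintro ⟨⟨a, b⟩, ⟨hadj, hs, ht⟩, heq⟩
      obtain ⟨rfl, rfl⟩ : a = w ∧ b = u := by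
        simpa [Prod.ext_iff] using heq
      exact ⟨hadj.symm, ht, hs⟩
  rw [this, Set.ncard_image_of_injective _ Prod.swap_injective]

example : True := trivial

/-- cross-set cardinality for a two-element cross set -/
private lemma cross_card {V : Type*} [Finite V] (u1 w1 u2 w2 : V)
    (hne : (u1, w1) ≠ (u2, w2)) (S : Set V) :
    {p ∈ ({(u1, w1), (u2, w2)} : Set (V × V)) | p.1 ∈ S}.ncard
      = (if u1 ∈ S then 1 else 0) + (if u2 ∈ S then 1 else 0) := by
  by_cases h1 : u1 ∈ S <;> by_cases h2 : u2 ∈ S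
  · rw [if_pos h1, if_pos h2]
    have : {p ∈ ({(u1, w1), (u2, w2)} : Set (V × V)) | p.1 ∈ S}
        = {(u1, w1), (u2, w2)} := by
      ext p; constructor
      · rintro ⟨hp, _⟩; exact hp
      · rintro (rfl | rfl) <;> exact ⟨by simp, by simpa⟩
    rw [this, Set.ncard_pair hne]
  · rw [if_pos h1, if_neg h2]
    have : {p ∈ ({(u1, w1), (u2, w2)} : Set (V × V)) | p.1 ∈ S} = {(u1, w1)} := by
      ext p; constructor
      · rintro ⟨rfl | rfl, hp⟩
        · rfl
        · exact absurd hp h2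
      · rintro rfl; exact ⟨Or.inl rfl, h1⟩
    rw [this, Set.ncard_singleton]
  · rw [if_neg h1, if_pos h2]
    have : {p ∈ ({(u1, w1), (u2, w2)} : Set (V × V)) | p.1 ∈ S} = {(u2, w2)} := by
      ext p; constructor
      · rintro ⟨rfl | rfl, hp⟩
        · exact absurd hp h1
        · rfl
      · rintro rfl; exact ⟨Or.inr rfl, h2⟩
    rw [this, Set.ncard_singleton]
  · rw [if_neg h1, if_neg h2]
    have : {p ∈ ({(u1, w1), (u2, w2)} : Set (V × V)) | p.1 ∈ S} = ∅ := by
      ext p; simp only [Set.mem_empty_iff_false, iff_false]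
      rintro ⟨rfl | rfl, hp⟩
      exacts [h1 hp, h2 hp]
    rw [this, Set.ncard_empty]

/-- the "within X" count is even, via bipartiteness -/
private lemma within_even {V : Type*} [Finite V] {G : SimpleGraph V} (H : G.Subgraph)
    (A B X : Set V) (hUn : A ∪ B = Set.univ) (hDis : Disjoint A B)
    (hbip : ∀ u v : V, G.Adj u v → ((u ∈ A ∧ v ∈ B) ∨ (u ∈ B ∧ v ∈ A))) :
    {p : V × V | H.Adj p.1 p.2 ∧ p.1 ∈ X ∧ p.2 ∈ X}.ncard
      = 2 * {p : V × V | H.Adj p.1 p.2 ∧ p.1 ∈ X ∩ A ∧ p.2 ∈ X ∩ B}.ncard := by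
  have hAorB : ∀ v : V, v ∈ A ∨ v ∈ B := by
    intro v
    have := Set.mem_univ v
    rw [← hUn] at this
    exact this
  have hsplit := ncard_split {p : V × V | H.Adj p.1 p.2 ∧ p.1 ∈ X ∧ p.2 ∈ X}
    (fun p => p.1 ∈ A)
  have e1 : {p ∈ {p : V × V | H.Adj p.1 p.2 ∧ p.1 ∈ X ∧ p.2 ∈ X} | p.1 ∈ A}
      = {p : V × V | H.Adj p.1 p.2 ∧ p.1 ∈ X ∩ A ∧ p.2 ∈ X ∩ B} := by
    ext p
    simp only [Set.mem_setOf_eq, Set.mem_inter_iff]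
    constructor
    · rintro ⟨⟨hadj, hx1, hx2⟩, hA⟩
      rcases hbip _ _ (H.adj_sub hadj) with ⟨_, hB2⟩ | ⟨hB1, _⟩
      · exact ⟨hadj, ⟨hx1, hA⟩, hx2, hB2⟩
      · exact absurd hB1 (Set.disjoint_left.mp hDis hA)
    · rintro ⟨hadj, ⟨hx1, hA⟩, hx2, _⟩
      exact ⟨⟨hadj, hx1, hx2⟩, hA⟩
  have e2 : {p ∈ {p : V × V | H.Adj p.1 p.2 ∧ p.1 ∈ X ∧ p.2 ∈ X} | ¬ p.1 ∈ A}
      = {p : V × V | H.Adj p.1 p.2 ∧ p.1 ∈ X ∩ B ∧ p.2 ∈ X ∩ A} := by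
    ext p
    simp only [Set.mem_setOf_eq, Set.mem_inter_iff]
    constructor
    · rintro ⟨⟨hadj, hx1, hx2⟩, hA⟩
      have hB1 : p.1 ∈ B := (hAorB p.1).resolve_left hA
      rcases hbip _ _ (H.adj_sub hadj) with ⟨hA1, _⟩ | ⟨_, hA2⟩
      · exact absurd hB1 (Set.disjoint_left.mp hDis hA1)
      · exact ⟨hadj, ⟨hx1, hB1⟩, hx2, hA2⟩
    · rintro ⟨hadj, ⟨hx1, hB1⟩, hx2, _⟩
      exact ⟨⟨hadj, hx1, hx2⟩, fun hA => Set.disjoint_left.mp hDis hA hB1⟩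
  have e3 := cnt_swap H (X ∩ B) (X ∩ A)
  rw [e1, e2, e3] at hsplit
  omega

/-- the core counting identity -/
private lemma core_count {V : Type*} [Finite V] {G : SimpleGraph V} (H : G.Subgraph)
    (hdeg : ∀ v : V, (H.neighborSet v).ncard = 2)
    (A B X : Set V) (hUn : A ∪ B = Set.univ) (hDis : Disjoint A B)
    (hbip : ∀ u v : V, G.Adj u v → ((u ∈ A ∧ v ∈ B) ∨ (u ∈ B ∧ v ∈ A)))
    (u1 w1 u2 w2 : V)
    (hC : {p : V × V | H.Adj p.1 p.2 ∧ p.1 ∈ X ∧ p.2 ∉ X} = {(u1, w1), (u2, w2)})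
    (hne : (u1, w1) ≠ (u2, w2)) :
    2 * (X ∩ A).ncard + ((if u1 ∈ B then 1 else 0) + (if u2 ∈ B then 1 else 0))
      = 2 * (X ∩ B).ncard + ((if u1 ∈ A then 1 else 0) + (if u2 ∈ A then 1 else 0)) := by
  have hAorB : ∀ v : V, v ∈ A ∨ v ∈ B := by
    intro v
    have := Set.mem_univ v
    rw [← hUn] at this
    exact this
  -- cross sets restricted to colour classes
  have crossEq : ∀ S : Set V, S ⊆ A ∨ S ⊆ B →
      {p : V × V | H.Adj p.1 p.2 ∧ p.1 ∈ X ∩ S ∧ p.2 ∉ X}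
        = {p ∈ ({(u1, w1), (u2, w2)} : Set (V × V)) | p.1 ∈ S} := by
    intro S _
    ext p
    simp only [Set.mem_setOf_eq, Set.mem_inter_iff]
    constructor
    · rintro ⟨hadj, ⟨hx, hS⟩, hnx⟩
      have : p ∈ {p : V × V | H.Adj p.1 p.2 ∧ p.1 ∈ X ∧ p.2 ∉ X} := ⟨hadj, hx, hnx⟩
      rw [hC] at this
      exact ⟨this, hS⟩
    · rintro ⟨hp, hS⟩
      have : p ∈ {p : V × V | H.Adj p.1 p.2 ∧ p.1 ∈ X ∧ p.2 ∉ X} := by rw [hC]; exact hp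
      exact ⟨this.1, ⟨this.2.1, hS⟩, this.2.2⟩
  -- degree sums for X∩A and X∩B, split along p.2 ∈ X
  have degA := degsum H hdeg (X ∩ A)
  have degB := degsum H hdeg (X ∩ B)
  have splA := ncard_split {p : V × V | H.Adj p.1 p.2 ∧ p.1 ∈ X ∩ A} (fun p => p.2 ∈ X)
  have splB := ncard_split {p : V × V | H.Adj p.1 p.2 ∧ p.1 ∈ X ∩ B} (fun p => p.2 ∈ X)
  have inA : {p ∈ {p : V × V | H.Adj p.1 p.2 ∧ p.1 ∈ X ∩ A} | p.2 ∈ X}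
      = {p : V × V | H.Adj p.1 p.2 ∧ p.1 ∈ X ∩ A ∧ p.2 ∈ X ∩ B} := by
    ext p
    simp only [Set.mem_setOf_eq, Set.mem_inter_iff]
    constructor
    · rintro ⟨⟨hadj, hx, hA⟩, hx2⟩
      rcases hbip _ _ (H.adj_sub hadj) with ⟨_, hB2⟩ | ⟨hB1, _⟩
      · exact ⟨hadj, ⟨hx, hA⟩, hx2, hB2⟩
      · exact absurd hB1 (Set.disjoint_left.mp hDis hA)
    · rintro ⟨hadj, ⟨hx, hA⟩, hx2, _⟩
      exact ⟨⟨hadj, hx, hA⟩, hx2⟩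
  have inB : {p ∈ {p : V × V | H.Adj p.1 p.2 ∧ p.1 ∈ X ∩ B} | p.2 ∈ X}
      = {p : V × V | H.Adj p.1 p.2 ∧ p.1 ∈ X ∩ B ∧ p.2 ∈ X ∩ A} := by
    ext p
    simp only [Set.mem_setOf_eq, Set.mem_inter_iff]
    constructor
    · rintro ⟨⟨hadj, hx, hB⟩, hx2⟩
      rcases hbip _ _ (H.adj_sub hadj) with ⟨hA1, _⟩ | ⟨_, hA2⟩
      · exact (Set.disjoint_left.mp hDis hA1 hB).elim
      · exact ⟨hadj, ⟨hx, hB⟩, hx2, hA2⟩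
    · rintro ⟨hadj, ⟨hx, hB⟩, hx2, _⟩
      exact ⟨⟨hadj, hx, hB⟩, hx2⟩
  have outA : {p ∈ {p : V × V | H.Adj p.1 p.2 ∧ p.1 ∈ X ∩ A} | ¬ p.2 ∈ X}
      = {p : V × V | H.Adj p.1 p.2 ∧ p.1 ∈ X ∩ A ∧ p.2 ∉ X} := by
    ext p
    simp only [Set.mem_setOf_eq]
    tauto
  have outB : {p ∈ {p : V × V | H.Adj p.1 p.2 ∧ p.1 ∈ X ∩ B} | ¬ p.2 ∈ X}
      = {p : V × V | H.Adj p.1 p.2 ∧ p.1 ∈ X ∩ B ∧ p.2 ∉ X} := by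
    ext p
    simp only [Set.mem_setOf_eq]
    tauto
  have hswap := cnt_swap H (X ∩ B) (X ∩ A)
  have cA := crossEq A (Or.inl (fun _ h => h))
  have cB := crossEq B (Or.inr (fun _ h => h))
  rw [degA, inA, outA, cA, cross_card u1 w1 u2 w2 hne A] at splA
  rw [degB, inB, outB, cB, cross_card u1 w1 u2 w2 hne B, hswap] at splB
  omega



/-- A graph is cubic if every vertex has degree 3. -/
def IsCubic {V : Type*} (G : SimpleGraph V) : Prop :=
  ∀ v : V, (G.neighborSet v).ncard = 3

/-- A 2-factor of `G` is a 2-regular spanning subgraph of `G`. -/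
def IsTwoFactor {V : Type*} (G : SimpleGraph V) (H : G.Subgraph) : Prop :=
  H.IsSpanning ∧ ∀ v : V, (H.neighborSet v).ncard = 2

/-- A graph is 2-factor Hamiltonian if every 2-factor of it is a Hamiltonian cycle,
i.e. a connected 2-regular spanning subgraph. -/
def IsTwoFactorHamiltonian {V : Type*} (G : SimpleGraph V) : Prop :=
  ∀ H : G.Subgraph, IsTwoFactor G H → H.Connected

/-- A brace is a connected bipartite graph on at least four vertices in which every
matching of size at most two is contained in a perfect matching. -/
def IsBrace {V : Type*} (G : SimpleGraph V) : Prop :=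
  G.Connected ∧ G.Colorable 2 ∧ 4 ≤ Nat.card V ∧
    ∀ M : G.Subgraph, M.IsMatching → M.edgeSet.ncard ≤ 2 →
      ∃ P : G.Subgraph, M ≤ P ∧ P.IsPerfectMatching

/-- The Heawood graph, as the point-line incidence graph of the Fano plane:
points and lines are indexed by `Fin 7`, and point `p` lies on line `l` iff
`p + l ∈ {0, 1, 3}` (mod 7), `{0,1,3}` being a planar difference set mod 7. -/
def heawoodGraph : SimpleGraph (Fin 7 ⊕ Fin 7) :=
  SimpleGraph.fromRel fun a b => ∃ p l : Fin 7,
    a = Sum.inl p ∧ b = Sum.inr l ∧ (p + l = 0 ∨ p + l = 1 ∨ p + l = 3)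

/-- A cycle (given as a closed walk) alternates between edges of the subgraph `M`
and edges not in `M`; the wrap-around pair is included by appending the first edge. -/
def IsAlternatingCycle {V : Type*} {G : SimpleGraph V} (M : G.Subgraph) {v : V}
    (p : G.Walk v v) : Prop :=
  p.IsCycle ∧
    List.Chain' (fun e f => e ∈ M.edgeSet ↔ f ∉ M.edgeSet) (p.edges ++ p.edges.take 1)

/-- `σ` is a Pfaffian orientation of `G`: it orients every edge (exactly one direction),
and for every perfect matching `M` and every `M`-alternating cycle, the number of
its edges oriented in agreement with the direction of traversal is odd. -/
def IsPfaffianOrientation {V : Type*} (G : SimpleGraph V) (σ : V → V → Bool) : Prop :=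
  (∀ u v : V, G.Adj u v → σ u v = !σ v u) ∧
  ∀ M : G.Subgraph, M.IsPerfectMatching →
    ∀ (v : V) (p : G.Walk v v), IsAlternatingCycle M p →
      Odd (p.darts.filter fun d => σ d.toProd.1 d.toProd.2).length

/-- A graph with a perfect matching is Pfaffian if it admits a Pfaffian orientation. -/
def IsPfaffian {V : Type*} (G : SimpleGraph V) : Prop :=
  (∃ M : G.Subgraph, M.IsPerfectMatching) ∧ ∃ σ : V → V → Bool, IsPfaffianOrientation G σ

/-- The cut `∂X`: the set of edges of `G` with exactly one endpoint in `X`. -/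
def edgeCut {V : Type*} (G : SimpleGraph V) (X : Set V) : Set (Sym2 V) :=
  {e | e ∈ G.edgeSet ∧ ∃ u w : V, e = s(u, w) ∧ u ∈ X ∧ w ∉ X}

/-- A cut `∂X` is tight if every perfect matching contains exactly one of its edges. -/
def IsTightCut {V : Type*} (G : SimpleGraph V) (X : Set V) : Prop :=
  ∀ M : G.Subgraph, M.IsPerfectMatching → (edgeCut G X ∩ M.edgeSet).ncard = 1

/-- A cut `∂X` is trivial if `|X| = 1` or `|V(G) \ X| = 1`. -/
def IsTrivialCut {V : Type*} (X : Set V) : Prop :=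
  X.ncard = 1 ∨ (Xᶜ : Set V).ncard = 1

/-- The tight cut contraction keeping `X`: contract `V(G) \ X` into a single vertex
(`Sum.inr ()`), deleting loops and parallel edges. -/
def contractOutside {V : Type*} (G : SimpleGraph V) (X : Set V) :
    SimpleGraph (↥X ⊕ Unit) :=
  SimpleGraph.fromRel fun a b =>
    (∃ u v : X, a = Sum.inl u ∧ b = Sum.inl v ∧ G.Adj u v) ∨
    (∃ (u : X) (w : V), w ∉ X ∧ a = Sum.inl u ∧ b = Sum.inr () ∧ G.Adj u w)

/-- A graph is `k`-connected if it has more than `k` vertices and deleting any set of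
fewer than `k` vertices leaves it connected. -/
def IsKConnected {V : Type*} (k : ℕ) (G : SimpleGraph V) : Prop :=
  k < Nat.card V ∧ ∀ S : Set V, S.ncard < k → (G.induce (Sᶜ : Set V)).Connected

/-- A graph is matching covered if it is connected, has an edge, and every edge
lies in a perfect matching. -/
def IsMatchingCovered {V : Type*} (G : SimpleGraph V) : Prop :=
  G.Connected ∧ G.edgeSet.Nonempty ∧
    ∀ e ∈ G.edgeSet, ∃ M : G.Subgraph, M.IsPerfectMatching ∧ e ∈ M.edgeSet

/-- A graph is bridgeless if no edge is a bridge. -/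
def Bridgeless {V : Type*} (G : SimpleGraph V) : Prop :=
  ∀ e : Sym2 V, ¬ G.IsBridge e

/-- `(A, B)` is a bipartition of `G` into the two colour classes `A` and `B`. -/
def IsBipartition {V : Type*} (G : SimpleGraph V) (A B : Set V) : Prop :=
  A ∪ B = Set.univ ∧ Disjoint A B ∧
    ∀ u v : V, G.Adj u v → ((u ∈ A ∧ v ∈ B) ∨ (u ∈ B ∧ v ∈ A))

/-- `G` is the star product `(G1,v1)*(G2,v2)`, witnessed by the embeddings `f` of
`G1 - v1` and `g` of `G2 - v2` into `G`, and the bijection `m` matching the three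
neighbours of `v1` to the three neighbours of `v2`: `v1` and `v2` have degree 3,
the images of `f` and `g` partition the vertices of `G`, and the edges of `G` are
exactly the edges of `G1 - v1`, the edges of `G2 - v2`, and the three matching edges
`f x — g (m x)` for `x` a neighbour of `v1`. -/
def IsStarProductWitness {V V1 V2 : Type*} (G : SimpleGraph V)
    (G1 : SimpleGraph V1) (v1 : V1) (G2 : SimpleGraph V2) (v2 : V2)
    (f : V1 → V) (g : V2 → V) (m : V1 → V2) : Prop :=
  (G1.neighborSet v1).ncard = 3 ∧ (G2.neighborSet v2).ncard = 3 ∧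
  Set.InjOn f {x | x ≠ v1} ∧ Set.InjOn g {y | y ≠ v2} ∧
  (∀ x y, x ≠ v1 → y ≠ v2 → f x ≠ g y) ∧
  (∀ v : V, (∃ x, x ≠ v1 ∧ f x = v) ∨ (∃ y, y ≠ v2 ∧ g y = v)) ∧
  Set.BijOn m (G1.neighborSet v1) (G2.neighborSet v2) ∧
  (∀ a b : V, G.Adj a b ↔
    ((∃ x y, x ≠ v1 ∧ y ≠ v1 ∧ G1.Adj x y ∧ a = f x ∧ b = f y) ∨
     (∃ x y, x ≠ v2 ∧ y ≠ v2 ∧ G2.Adj x y ∧ a = g x ∧ b = g y) ∨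
     (∃ x, G1.Adj v1 x ∧ ((a = f x ∧ b = g (m x)) ∨ (b = f x ∧ a = g (m x))))))

/-- `G` is a star product `(G1,v1)*(G2,v2)`. -/
def IsStarProduct {V V1 V2 : Type*} (G : SimpleGraph V)
    (G1 : SimpleGraph V1) (v1 : V1) (G2 : SimpleGraph V2) (v2 : V2) : Prop :=
  ∃ (f : V1 → V) (g : V2 → V) (m : V1 → V2),
    IsStarProductWitness G G1 v1 G2 v2 f g m

/-- The principal 3-edge cut of a star product: the three added matching edges. -/
def principalCut {V V1 V2 : Type*} (G1 : SimpleGraph V1) (v1 : V1)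
    (f : V1 → V) (g : V2 → V) (m : V1 → V2) : Set (Sym2 V) :=
  {e | ∃ x, G1.Adj v1 x ∧ e = s(f x, g (m x))}

/-- Let `G` be a bipartite graph with colour classes `A` and `B` that
can be represented as the star product `(G1,v1)*(G2,v2)` with principal 3-edge cut `∂X`,
where `X = V(G1) \ {v1}`, and suppose that any two edges of `∂X` occur together in some
2-factor of `G`. Then the three endpoints lying in `X` of the edges of `∂X` (i.e. the
vertices `f x` for `x` a neighbour of `v1` in `G1`) all belong to the same colour class
of `G`. -/

theorem principalCut_endpoints_same_colour {V V1 V2 : Type*}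
    [Fintype V] [Fintype V1] [Fintype V2]
    (G : SimpleGraph V) (A B : Set V) (hAB : IsBipartition G A B)
    (G1 : SimpleGraph V1) (v1 : V1) (G2 : SimpleGraph V2) (v2 : V2)
    (f : V1 → V) (g : V2 → V) (m : V1 → V2)
    (hw : IsStarProductWitness G G1 v1 G2 v2 f g m)
    (hpairs : ∀ e ∈ principalCut G1 v1 f g m, ∀ e' ∈ principalCut G1 v1 f g m, e ≠ e' →
      ∃ H : G.Subgraph, IsTwoFactor G H ∧ e ∈ H.edgeSet ∧ e' ∈ H.edgeSet) :
    (∀ x : V1, G1.Adj v1 x → f x ∈ A) ∨ (∀ x : V1, G1.Adj v1 x → f x ∈ B) := by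
  obtain ⟨hUn, hDis, hbip⟩ := hAB
  obtain ⟨hd1, _hd2, hfinj, _hginj, hfg, _hcover, hm, hadj⟩ := hw
  have hAorB : ∀ v : V, v ∈ A ∨ v ∈ B := by
    intro v
    have := Set.mem_univ v
    rw [← hUn] at this
    exact this
  set X : Set V := {v | ∃ x, x ≠ v1 ∧ f x = v} with hXdef
  have hgnotX : ∀ y : V2, y ≠ v2 → g y ∉ X := by
    rintro y hy ⟨x, hx, hfx⟩
    exact hfg x y hx hy hfx
  have hmne : ∀ x : V1, G1.Adj v1 x → m x ≠ v2 := by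
    intro x hx heq
    have hmem : m x ∈ G2.neighborSet v2 := hm.mapsTo hx
    rw [heq] at hmem
    exact G2.irrefl hmem
  have hfmem : ∀ x : V1, G1.Adj v1 x → f x ∈ X := fun x hx => ⟨x, hx.ne', rfl⟩
  -- distinct f-images for distinct neighbours of v1
  have hfne : ∀ x y : V1, G1.Adj v1 x → G1.Adj v1 y → x ≠ y → f x ≠ f y := by
    intro x y hx hy hxy heq
    exact hxy (hfinj hx.ne' hy.ne' heq)
  -- edges of principal cut are distinct for distinct neighbours
  have hedgene : ∀ x y : V1, G1.Adj v1 x → G1.Adj v1 y → x ≠ y →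
      s(f x, g (m x)) ≠ s(f y, g (m y)) := by
    intro x y hx hy hxy heq
    rw [Sym2.eq_iff] at heq
    rcases heq with ⟨h1, _⟩ | ⟨h1, _⟩
    · exact hfne x y hx hy hxy h1
    · exact hfg x (m y) hx.ne' (hmne y hy) h1
  -- any crossing H-dart is a principal dart
  have hcrossSub : ∀ (H : G.Subgraph) (p : V × V),
      H.Adj p.1 p.2 → p.1 ∈ X → p.2 ∉ X → ∃ t, G1.Adj v1 t ∧ p = (f t, g (m t)) := by
    intro H p hadjp hx1 hx2
    have hG := H.adj_sub hadjp
    rw [hadj p.1 p.2] at hG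
    rcases hG with ⟨x, y, _, hy, _, _, hb⟩ | ⟨x, y, hx, _, _, ha, _⟩ |
      ⟨t, ht, ⟨ha, hb⟩ | ⟨hb, ha⟩⟩
    · exact absurd ⟨y, hy, hb.symm⟩ hx2
    · exact absurd (ha ▸ hgnotX x hx) (fun h => h hx1)
    · exact ⟨t, ht, Prod.ext ha hb⟩
    · exact absurd (ha ▸ hgnotX (m t) (hmne t ht)) (fun h => h hx1)
  -- key identity for any pair of distinct neighbours of v1
  have key : ∀ x y : V1, G1.Adj v1 x → G1.Adj v1 y → x ≠ y →
      2 * (X ∩ A).ncard + ((if f x ∈ B then 1 else 0) + (if f y ∈ B then 1 else 0))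
        = 2 * (X ∩ B).ncard + ((if f x ∈ A then 1 else 0) + (if f y ∈ A then 1 else 0)) := by
    intro x y hx hy hxy
    -- the third neighbour z
    have hsub : ({x, y} : Set V1) ⊆ G1.neighborSet v1 := by
      rintro t (rfl | rfl) <;> assumption
    have hdiff : ((G1.neighborSet v1) \ {x, y}).ncard = 1 := by
      rw [Set.ncard_diff hsub (Set.toFinite _), hd1, Set.ncard_pair hxy]
    obtain ⟨z, hz⟩ := Set.ncard_eq_one.mp hdiff
    have hzmem : z ∈ G1.neighborSet v1 := by
      have : z ∈ (G1.neighborSet v1) \ {x, y} := by rw [hz]; rfl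
      exact this.1
    have hzx : z ≠ x := by
      have : z ∈ (G1.neighborSet v1) \ {x, y} := by rw [hz]; rfl
      intro h
      exact this.2 (Or.inl h)
    have hzy : z ≠ y := by
      have : z ∈ (G1.neighborSet v1) \ {x, y} := by rw [hz]; rfl
      intro h
      exact this.2 (Or.inr h)
    have hNsub : ∀ t, G1.Adj v1 t → t = x ∨ t = y ∨ t = z := by
      intro t ht
      by_cases hl : t = x ∨ t = y
      · tauto
      · have : t ∈ (G1.neighborSet v1) \ {x, y} := ⟨ht, fun h => hl h⟩
        rw [hz] at this
        exact Or.inr (Or.inr this)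
    have hz1 : G1.Adj v1 z := hzmem
    -- get the 2-factor through the two edges
    obtain ⟨H, ⟨_, hdeg⟩, hex, hey⟩ := hpairs s(f x, g (m x)) ⟨x, hx, rfl⟩
      s(f y, g (m y)) ⟨y, hy, rfl⟩ (hedgene x y hx hy hxy)
    rw [SimpleGraph.Subgraph.mem_edgeSet] at hex hey
    -- the crossing set is exactly the two darts
    have hdx : ((f x, g (m x)) : V × V) ∈
        {p : V × V | H.Adj p.1 p.2 ∧ p.1 ∈ X ∧ p.2 ∉ X} :=
      ⟨hex, hfmem x hx, hgnotX (m x) (hmne x hx)⟩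
    have hdy : ((f y, g (m y)) : V × V) ∈
        {p : V × V | H.Adj p.1 p.2 ∧ p.1 ∈ X ∧ p.2 ∉ X} :=
      ⟨hey, hfmem y hy, hgnotX (m y) (hmne y hy)⟩
    have hznot : ¬ H.Adj (f z) (g (m z)) := by
      intro hez
      -- then the crossing set is the three darts, of odd cardinality
      have hCeq : {p : V × V | H.Adj p.1 p.2 ∧ p.1 ∈ X ∧ p.2 ∉ X}
          = {(f x, g (m x)), (f y, g (m y)), (f z, g (m z))} := by
        ext p
        constructor
        · rintro ⟨h1, h2, h3⟩
          obtain ⟨t, ht, rfl⟩ := hcrossSub H p h1 h2 h3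
          rcases hNsub t ht with rfl | rfl | rfl
          · exact Or.inl rfl
          · exact Or.inr (Or.inl rfl)
          · exact Or.inr (Or.inr rfl)
        · rintro (rfl | rfl | rfl)
          · exact hdx
          · exact hdy
          · exact ⟨hez, hfmem z hz1, hgnotX (m z) (hmne z hz1)⟩
      have hodd : {p : V × V | H.Adj p.1 p.2 ∧ p.1 ∈ X ∧ p.2 ∉ X}.ncard = 3 := by
        rw [hCeq]
        refine Set.ncard_eq_three.mpr ⟨_, _, _, ?_, ?_, ?_, rfl⟩
        · simp only [ne_eq, Prod.mk.injEq, not_and]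
          intro h
          exact absurd h (hfne x y hx hy hxy)
        · simp only [ne_eq, Prod.mk.injEq, not_and]
          intro h
          exact absurd h (hfne x z hx hz1 (fun e => hzx e.symm))
        · simp only [ne_eq, Prod.mk.injEq, not_and]
          intro h
          exact absurd h (hfne y z hy hz1 (fun e => hzy e.symm))
      -- but it must be even
      have hdsum := degsum H hdeg X
      have hspl := ncard_split {p : V × V | H.Adj p.1 p.2 ∧ p.1 ∈ X} (fun p => p.2 ∈ X)
      have hin : {p ∈ {p : V × V | H.Adj p.1 p.2 ∧ p.1 ∈ X} | p.2 ∈ X}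
          = {p : V × V | H.Adj p.1 p.2 ∧ p.1 ∈ X ∧ p.2 ∈ X} := by
        ext p
        simp only [Set.mem_setOf_eq]
        tauto
      have hout : {p ∈ {p : V × V | H.Adj p.1 p.2 ∧ p.1 ∈ X} | ¬ p.2 ∈ X}
          = {p : V × V | H.Adj p.1 p.2 ∧ p.1 ∈ X ∧ p.2 ∉ X} := by
        ext p
        simp only [Set.mem_setOf_eq]
        tauto
      have heven := within_even H A B X hUn hDis hbip
      rw [hdsum, hin, hout, heven, hodd] at hspl
      omega
    have hC : {p : V × V | H.Adj p.1 p.2 ∧ p.1 ∈ X ∧ p.2 ∉ X}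
        = {(f x, g (m x)), (f y, g (m y))} := by
      ext p
      constructor
      · rintro ⟨h1, h2, h3⟩
        obtain ⟨t, ht, rfl⟩ := hcrossSub H p h1 h2 h3
        rcases hNsub t ht with rfl | rfl | rfl
        · exact Or.inl rfl
        · exact Or.inr rfl
        · exact absurd h1 hznot
      · rintro (rfl | rfl)
        · exact hdx
        · exact hdy
    have hpne : ((f x, g (m x)) : V × V) ≠ (f y, g (m y)) := by
      simp only [ne_eq, Prod.mk.injEq, not_and]
      intro h
      exact absurd h (hfne x y hx hy hxy)
    exact core_count H hdeg A B X hUn hDis hbip _ _ _ _ hC hpne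
  -- conclude
  by_contra hcon
  push_neg at hcon
  obtain ⟨⟨x, hx, hxA⟩, ⟨y, hy, hyB⟩⟩ := hcon
  have hxB : f x ∈ B := (hAorB (f x)).resolve_left hxA
  have hyA : f y ∈ A := (hAorB (f y)).resolve_right hyB
  have hxy : x ≠ y := by
    rintro rfl
    exact hyB hxB
  -- third neighbour
  obtain ⟨H0, _⟩ := hpairs s(f x, g (m x)) ⟨x, hx, rfl⟩ s(f y, g (m y)) ⟨y, hy, rfl⟩
    (hedgene x y hx hy hxy)
  have e1 := key x y hx hy hxy
  rw [if_pos hxB, if_neg hyB, if_neg hxA, if_pos hyA] at e1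
  -- need a third neighbour z to get a contradiction
  have hsub : ({x, y} : Set V1) ⊆ G1.neighborSet v1 := by
    rintro t (rfl | rfl) <;> assumption
  have hdiff : ((G1.neighborSet v1) \ {x, y}).ncard = 1 := by
    rw [Set.ncard_diff hsub (Set.toFinite _), hd1, Set.ncard_pair hxy]
  obtain ⟨z, hz⟩ := Set.ncard_eq_one.mp hdiff
  have hzin : z ∈ (G1.neighborSet v1) \ {x, y} := by rw [hz]; rfl
  have hz1 : G1.Adj v1 z := hzin.1
  have hzx : z ≠ x := fun h => hzin.2 (Or.inl h)
  have hzy : z ≠ y := fun h => hzin.2 (Or.inr h)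
  rcases hAorB (f z) with hzA | hzB
  · have hzB' : f z ∉ B := Set.disjoint_left.mp hDis hzA
    have e2 := key y z hy hz1 (fun h => hzy h.symm)
    rw [if_neg hyB, if_neg hzB', if_pos hyA, if_pos hzA] at e2
    omega
  · have hzA' : f z ∉ A := fun h => Set.disjoint_left.mp hDis h hzB
    have e2 := key x z hx hz1 (fun h => hzx h.symm)
    rw [if_pos hxB, if_pos hzB, if_neg hxA, if_neg hzA'] at e2
    omega
end

section
/- Let G1 and G2 be cubic, matching covered graphs and let G = (G1,v1)*(G2,v2) with principal 3-edge cut ∂X. Then for every edge x ∈ ∂X there exists a perfect matching M of G with ∂X ∩ M = {x}; consequently, |∂X ∩ N| is odd for every perfect matching N of G. -/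
open SimpleGraph

/-- Let `G1` and `G2` be cubic, matching covered graphs and let
`G = (G1,v1)*(G2,v2)` with principal 3-edge cut `∂X`. Then for every edge `x ∈ ∂X` there
is a perfect matching `M` of `G` with `∂X ∩ M = {x}`; consequently, `|∂X ∩ N|` is odd
for every perfect matching `N` of `G`. -/
theorem principalCut_perfectMatchings {V V1 V2 : Type*}
    [Fintype V] [Fintype V1] [Fintype V2]
    (G : SimpleGraph V) (G1 : SimpleGraph V1) (v1 : V1) (G2 : SimpleGraph V2) (v2 : V2)
    (f : V1 → V) (g : V2 → V) (m : V1 → V2)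
    (h1c : IsCubic G1) (h1mc : IsMatchingCovered G1)
    (h2c : IsCubic G2) (h2mc : IsMatchingCovered G2)
    (hw : IsStarProductWitness G G1 v1 G2 v2 f g m) :
    (∀ x ∈ principalCut G1 v1 f g m, ∃ M : G.Subgraph, M.IsPerfectMatching ∧
        principalCut G1 v1 f g m ∩ M.edgeSet = {x}) ∧
    ∀ N : G.Subgraph, N.IsPerfectMatching →
      Odd (principalCut G1 v1 f g m ∩ N.edgeSet).ncard := by
  classical
  obtain ⟨hd1, hd2, hfinj, hginj, hfg, hcover, hmbij, hadj⟩ := hw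
  have hmx : ∀ x, G1.Adj v1 x → G2.Adj v2 (m x) := fun x hx => hmbij.1 hx
  -- Part 1
  have part1 : ∀ e ∈ principalCut G1 v1 f g m, ∃ M : G.Subgraph, M.IsPerfectMatching ∧
      principalCut G1 v1 f g m ∩ M.edgeSet = {e} := by
    rintro e ⟨x, hx, rfl⟩
    have hxv1 : x ≠ v1 := fun h => G1.irrefl (h ▸ hx)
    have hmxv2 : m x ≠ v2 := fun h => G2.irrefl (h ▸ hmx x hx)
    obtain ⟨M1, hM1, hM1e⟩ := h1mc.2.2 s(v1, x) (G1.mem_edgeSet.mpr hx)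
    obtain ⟨M2, hM2, hM2e⟩ := h2mc.2.2 s(v2, m x) (G2.mem_edgeSet.mpr (hmx x hx))
    rw [SimpleGraph.Subgraph.mem_edgeSet] at hM1e hM2e
    have u1 : ∀ p, ∃! q, M1.Adj p q := fun p => hM1.1 (hM1.2 p)
    have u2 : ∀ p, ∃! q, M2.Adj p q := fun p => hM2.1 (hM2.2 p)
    have uniq1 : ∀ a b c, M1.Adj a b → M1.Adj a c → b = c := by
      intro a b c hb hc
      obtain ⟨r, _, hru⟩ := u1 a
      rw [hru b hb, hru c hc]
    have uniq2 : ∀ a b c, M2.Adj a b → M2.Adj a c → b = c := by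
      intro a b c hb hc
      obtain ⟨r, _, hru⟩ := u2 a
      rw [hru b hb, hru c hc]
    have hu1x : ∀ q, M1.Adj x q → q = v1 := fun q h => uniq1 x q v1 h (M1.adj_symm hM1e)
    have hu1v1 : ∀ q, M1.Adj v1 q → q = x := fun q h => uniq1 v1 q x h hM1e
    have hu2mx : ∀ q, M2.Adj (m x) q → q = v2 := fun q h => uniq2 (m x) q v2 h (M2.adj_symm hM2e)
    have hu2v2 : ∀ q, M2.Adj v2 q → q = m x := fun q h => uniq2 v2 q (m x) h hM2e
    set R : V → V → Prop := fun a b =>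
      (∃ p q, p ≠ v1 ∧ q ≠ v1 ∧ M1.Adj p q ∧ a = f p ∧ b = f q) ∨
      (∃ p q, p ≠ v2 ∧ q ≠ v2 ∧ M2.Adj p q ∧ a = g p ∧ b = g q) ∨
      ((a = f x ∧ b = g (m x)) ∨ (b = f x ∧ a = g (m x))) with hRdef
    have Rsymm : ∀ a b, R a b → R b a := by
      rintro a b (⟨p, q, hp, hq, ha, h1, h2⟩ | ⟨p, q, hp, hq, ha, h1, h2⟩ | h | h)
      · exact Or.inl ⟨q, p, hq, hp, M1.adj_symm ha, h2, h1⟩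
      · exact Or.inr (Or.inl ⟨q, p, hq, hp, M2.adj_symm ha, h2, h1⟩)
      · exact Or.inr (Or.inr (Or.inr ⟨h.1, h.2⟩))
      · exact Or.inr (Or.inr (Or.inl ⟨h.1, h.2⟩))
    have Rsub : ∀ a b, R a b → G.Adj a b := by
      rintro a b (⟨p, q, hp, hq, ha, h1, h2⟩ | ⟨p, q, hp, hq, ha, h1, h2⟩ | h | h)
      · exact (hadj a b).mpr (Or.inl ⟨p, q, hp, hq, M1.adj_sub ha, h1, h2⟩)
      · exact (hadj a b).mpr (Or.inr (Or.inl ⟨p, q, hp, hq, M2.adj_sub ha, h1, h2⟩))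
      · exact (hadj a b).mpr (Or.inr (Or.inr ⟨x, hx, Or.inl h⟩))
      · exact (hadj a b).mpr (Or.inr (Or.inr ⟨x, hx, Or.inr ⟨h.1, h.2⟩⟩))
    set M : G.Subgraph :=
      { verts := Set.univ
        Adj := R
        adj_sub := fun h => Rsub _ _ h
        edge_vert := fun _ => trivial
        symm := ⟨fun a b h => Rsymm a b h⟩ } with hMdef
    have hMAdj : ∀ a b, M.Adj a b ↔ R a b := fun a b => Iff.rfl
    -- case analysis lemmas
    have fval : ∀ {p w}, p ≠ v1 → R (f p) w →
        (∃ q, q ≠ v1 ∧ M1.Adj p q ∧ w = f q) ∨ (p = x ∧ w = g (m x)) := by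
      rintro p w hp (⟨p', q', hp', hq', ha, h1, h2⟩ | ⟨p', q', hp', hq', ha, h1, h2⟩ | h | h)
      · have : p = p' := hfinj hp hp' h1
        exact Or.inl ⟨q', hq', this ▸ ha, h2⟩
      · exact absurd h1 (hfg p p' hp hp')
      · have : p = x := hfinj hp hxv1 h.1
        exact Or.inr ⟨this, h.2⟩
      · exact absurd h.2 (hfg p (m x) hp hmxv2)
    have gval : ∀ {y w}, y ≠ v2 → R (g y) w →
        (∃ q, q ≠ v2 ∧ M2.Adj y q ∧ w = g q) ∨ (y = m x ∧ w = f x) := by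
      rintro y w hy (⟨p', q', hp', hq', ha, h1, h2⟩ | ⟨p', q', hp', hq', ha, h1, h2⟩ | h | h)
      · exact absurd h1.symm (hfg p' y hp' hy)
      · have : y = p' := hginj hy hp' h1
        exact Or.inl ⟨q', hq', this ▸ ha, h2⟩
      · exact absurd h.1.symm (hfg x y hxv1 hy)
      · have : y = m x := hginj hy hmxv2 h.2
        exact Or.inr ⟨this, h.1⟩
    have hmatch : M.IsMatching := by
      intro v _
      rcases hcover v with ⟨p, hp, rfl⟩ | ⟨y, hy, rfl⟩
      · obtain ⟨q, hq, hqu⟩ := u1 p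
        by_cases hqv : q = v1
        · have hpx : p = x := hu1v1 p (M1.adj_symm (hqv ▸ hq))
          refine ⟨g (m x), Or.inr (Or.inr (Or.inl ⟨by rw [hpx], rfl⟩)), ?_⟩
          intro w hw
          rcases fval hp hw with ⟨q', hq', ha, rfl⟩ | ⟨_, rfl⟩
          · rw [hpx] at ha
            exact absurd (hu1x q' ha) hq'
          · rfl
        · refine ⟨f q, Or.inl ⟨p, q, hp, hqv, hq, rfl, rfl⟩, ?_⟩
          intro w hw
          rcases fval hp hw with ⟨q', hq', ha, rfl⟩ | ⟨hpx, rfl⟩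
          · rw [hqu q' ha]
          · rw [hpx] at hq
            exact absurd (hu1x q hq) hqv
      · obtain ⟨q, hq, hqu⟩ := u2 y
        by_cases hqv : q = v2
        · have hyx : y = m x := hu2v2 y (M2.adj_symm (hqv ▸ hq))
          refine ⟨f x, Or.inr (Or.inr (Or.inr ⟨rfl, by rw [hyx]⟩)), ?_⟩
          intro w hw
          rcases gval hy hw with ⟨q', hq', ha, rfl⟩ | ⟨_, rfl⟩
          · rw [hyx] at ha
            exact absurd (hu2mx q' ha) hq'
          · rfl
        · refine ⟨g q, Or.inr (Or.inl ⟨y, q, hy, hqv, hq, rfl, rfl⟩), ?_⟩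
          intro w hw
          rcases gval hy hw with ⟨q', hq', ha, rfl⟩ | ⟨hyx, rfl⟩
          · rw [hqu q' ha]
          · rw [hyx] at hq
            exact absurd (hu2mx q hq) hqv
    refine ⟨M, ⟨hmatch, fun v => trivial⟩, ?_⟩
    ext e
    simp only [Set.mem_inter_iff, Set.mem_singleton_iff, principalCut, Set.mem_setOf_eq]
    constructor
    · rintro ⟨⟨x', hx', rfl⟩, he⟩
      rw [SimpleGraph.Subgraph.mem_edgeSet] at he
      have hx'v1 : x' ≠ v1 := fun h => G1.irrefl (h ▸ hx')
      have hmx'v2 : m x' ≠ v2 := fun h => G2.irrefl (h ▸ hmx x' hx')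
      rcases fval hx'v1 he with ⟨q', hq', ha, heq⟩ | ⟨h1, _⟩
      · exact absurd heq.symm (hfg q' (m x') hq' hmx'v2)
      · rw [h1]
    · rintro rfl
      exact ⟨⟨x, hx, rfl⟩,
        SimpleGraph.Subgraph.mem_edgeSet.mpr (Or.inr (Or.inr (Or.inl ⟨rfl, rfl⟩)))⟩
  refine ⟨part1, ?_⟩
  -- Part 2
  have evenV1 : Even (Fintype.card V1) := by
    obtain ⟨e, he⟩ := h1mc.2.1
    obtain ⟨M1, hM1, -⟩ := h1mc.2.2 e he
    exact hM1.even_card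
  intro N hN
  have upart : ∀ v : V, ∃ w, N.Adj v w ∧ ∀ y, N.Adj v y → y = w := fun v => hN.1 (hN.2 v)
  choose pt hpt hptu using upart
  set X : Set V := f '' {p | p ≠ v1} with hXdef
  have hXf : ∀ p, p ≠ v1 → f p ∈ X := fun p hp => ⟨p, hp, rfl⟩
  have hXg : ∀ y, y ≠ v2 → g y ∉ X := by
    rintro y hy ⟨p, hp, hpe⟩
    exact hfg p y hp hy hpe
  have hXcard : X.ncard = Fintype.card V1 - 1 := by
    rw [hXdef, Set.ncard_image_of_injOn hfinj]
    have h1 : ({p : V1 | p ≠ v1}) = ({v1}ᶜ : Set V1) := rfl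
    have h2 := Set.ncard_add_ncard_compl ({v1} : Set V1)
    rw [Set.ncard_singleton, Nat.card_eq_fintype_card] at h2
    rw [h1]
    omega
  have hXodd : Odd X.ncard := by
    rw [hXcard]
    haveI : Nonempty V1 := ⟨v1⟩
    exact Nat.Even.sub_odd Fintype.card_pos evenV1 odd_one
  set A : Set V := {v | v ∈ X ∧ pt v ∉ X} with hAdef
  set B : Set V := {v | v ∈ X ∧ pt v ∈ X} with hBdef
  have hXAB : X = A ∪ B := by
    ext v
    simp only [hAdef, hBdef, Set.mem_union, Set.mem_setOf_eq]
    tauto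
  have hABdisj : Disjoint A B := by
    rw [Set.disjoint_left]
    rintro v ⟨_, h1⟩ ⟨_, h2⟩
    exact h1 h2
  -- A corresponds bijectively to cut ∩ N
  have hA : ∀ v ∈ A, ∃ x', G1.Adj v1 x' ∧ v = f x' ∧ pt v = g (m x') := by
    rintro v ⟨hvX, hpX⟩
    obtain ⟨p, hp, rfl⟩ := hvX
    have hGa : G.Adj (f p) (pt (f p)) := N.adj_sub (hpt (f p))
    rcases (hadj _ _).mp hGa with ⟨p', q', hp', hq', _, h1, h2⟩ |
        ⟨p', q', hp', hq', _, h1, h2⟩ | ⟨x', hx', h | h⟩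
    · exact absurd (show pt (f p) ∈ X by rw [h2]; exact hXf q' hq') hpX
    · exact absurd h1 (hfg p p' hp hp')
    · exact ⟨x', hx', h.1, h.2⟩
    · exact absurd h.2 (hfg p (m x') hp
        (fun hc => G2.irrefl (hc ▸ hmx x' hx')))
  have himg : (fun v => s(v, pt v)) '' A = principalCut G1 v1 f g m ∩ N.edgeSet := by
    ext e
    constructor
    · rintro ⟨v, hv, rfl⟩
      obtain ⟨x', hx', h1, h2⟩ := hA v hv
      refine ⟨⟨x', hx', show s(v, pt v) = s(f x', g (m x')) by rw [h2, h1]⟩, ?_⟩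
      exact SimpleGraph.Subgraph.mem_edgeSet.mpr (hpt v)
    · rintro ⟨⟨x', hx', rfl⟩, he⟩
      rw [SimpleGraph.Subgraph.mem_edgeSet] at he
      have hx'v1 : x' ≠ v1 := fun h => G1.irrefl (h ▸ hx')
      have hmx'v2 : m x' ≠ v2 := fun h => G2.irrefl (h ▸ hmx x' hx')
      have hptv : pt (f x') = g (m x') := (hptu (f x') _ he).symm
      refine ⟨f x', ⟨hXf x' hx'v1, ?_⟩, ?_⟩
      · rw [hptv]
        exact hXg (m x') hmx'v2
      · show s(f x', pt (f x')) = s(f x', g (m x'))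
        rw [hptv]
  have hAinj : Set.InjOn (fun v => s(v, pt v)) A := by
    rintro v hv w hw he
    rcases Sym2.eq_iff.mp he with ⟨h1, _⟩ | ⟨h1, h2⟩
    · exact h1
    · exact absurd (h1 ▸ hw.2) (fun hc => hc hv.1)
  have hAcard : A.ncard = (principalCut G1 v1 f g m ∩ N.edgeSet).ncard := by
    rw [← himg, Set.ncard_image_of_injOn hAinj]
  -- B has even cardinality: it is the vertex set of a matching
  have hBeven : Even B.ncard := by
    set NB : G.Subgraph :=
      { verts := B
        Adj := fun a b => N.Adj a b ∧ a ∈ X ∧ b ∈ X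
        adj_sub := fun h => N.adj_sub h.1
        edge_vert := by
          rintro a b ⟨ha, haX, hbX⟩
          exact ⟨haX, (hptu a b ha) ▸ hbX⟩
        symm := by
          constructor
          rintro a b ⟨ha, haX, hbX⟩
          exact ⟨N.adj_symm ha, hbX, haX⟩ } with hNBdef
    have hNBmatch : NB.IsMatching := by
      rintro v ⟨hvX, hpvX⟩
      refine ⟨pt v, ⟨hpt v, hvX, hpvX⟩, ?_⟩
      rintro w ⟨hw, _, _⟩
      exact hptu v w hw
    haveI : Fintype ↥NB.verts := Set.Finite.fintype (Set.toFinite _)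
    have := hNBmatch.even_card
    have hcard : B.ncard = NB.verts.toFinset.card := Set.ncard_eq_toFinset_card' _
    rw [hcard]
    exact this
  have hsum : X.ncard = A.ncard + B.ncard := by
    rw [hXAB, Set.ncard_union_eq hABdisj (Set.toFinite _) (Set.toFinite _)]
  rw [← hAcard]
  obtain ⟨b, hb⟩ := hBeven
  obtain ⟨c, hc⟩ := hXodd
  rw [Nat.odd_iff]
  omega
end
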